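/- Define N₄(η) := cosh(η)/sinh²(η) + log(tanh(η/2)) for η > 0. Then N₄(η) > 0 for all η > 0 and lim_{η→∞} (1/η) · log N₄(η) = −3. -/

import Mathlib

open Real Filter

lemma sinh_le_cubic {u : ℝ} (h0 : 0 ≤ u) (h1 : u ≤ 1) : Real.sinh u ≤ u + u ^ 3 := by
  have habs : |u| ≤ 1 := by rwa [abs_of_nonneg h0]
  have hb1 := Real.exp_bound habs (n := 3) (by norm_num)
  have habs2 : |(-u)| ≤ 1 := by rwa [abs_neg]
  have hb2 := Real.exp_bound habs2 (n := 3) (by norm_num)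
  rw [abs_of_nonneg h0] at hb1
  rw [abs_neg, abs_of_nonneg h0] at hb2
  simp [Finset.sum_range_succ, Nat.factorial] at hb1 hb2
  rw [abs_le] at hb1 hb2
  rw [Real.sinh_eq]
  nlinarith [hb1.1, hb1.2, hb2.1, hb2.2, pow_nonneg h0 3]

lemma sinh_neg_log_tanh {η : ℝ} (hη : 0 < η) :
    Real.sinh (-Real.log (Real.tanh (η / 2))) = 1 / Real.sinh η := by
  have hs : 0 < Real.sinh (η / 2) := Real.sinh_pos_iff.2 (by linarith)
  have hc : 0 < Real.cosh (η / 2) := Real.cosh_pos _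
  have hx : 0 < Real.tanh (η / 2) := by
    rw [Real.tanh_eq_sinh_div_cosh]; positivity
  have hη2 : Real.sinh η = 2 * Real.sinh (η / 2) * Real.cosh (η / 2) := by
    rw [show η = η / 2 + η / 2 by ring, Real.sinh_add]; ring
  have hsq := Real.cosh_sq_sub_sinh_sq (η / 2)
  rw [Real.sinh_eq, Real.exp_neg, Real.exp_log hx, neg_neg, Real.exp_log hx, hη2,
    Real.tanh_eq_sinh_div_cosh]
  field_simp
  linear_combination hsq

/-- Numerator of the hitting probability of the 4-dimensional hyperbolic Brownian motion:
`N₄(η) = cosh η / sinh² η + log(tanh(η/2))`. -/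
noncomputable def N₄ (η : ℝ) : ℝ :=
  Real.cosh η / Real.sinh η ^ 2 + Real.log (Real.tanh (η / 2))

lemma tanh_half_lt_one {η : ℝ} (hη : 0 < η) : Real.tanh (η / 2) < 1 := by
  have hc : 0 < Real.cosh (η / 2) := Real.cosh_pos _
  have h := Real.cosh_sub_sinh (η / 2)
  have he : 0 < Real.exp (-(η / 2)) := Real.exp_pos _
  rw [Real.tanh_eq_sinh_div_cosh, div_lt_one hc]
  linarith

lemma tanh_half_pos {η : ℝ} (hη : 0 < η) : 0 < Real.tanh (η / 2) := by
  have hs : 0 < Real.sinh (η / 2) := Real.sinh_pos_iff.2 (by linarith)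
  have hc : 0 < Real.cosh (η / 2) := Real.cosh_pos _
  rw [Real.tanh_eq_sinh_div_cosh]; positivity

lemma cosh_div_key {η : ℝ} (hs : 0 < Real.sinh η) :
    Real.cosh η / Real.sinh η ^ 2 - 1 / Real.sinh η = Real.exp (-η) / Real.sinh η ^ 2 := by
  field_simp
  linear_combination (Real.cosh_sub_sinh η)

lemma N4_lower {η : ℝ} (hη : 0 < η) : Real.exp (-η) / Real.sinh η ^ 2 ≤ N₄ η := by
  set u := -Real.log (Real.tanh (η / 2)) with hu
  have hs : 0 < Real.sinh η := Real.sinh_pos_iff.2 hη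
  have hu0 : 0 < u := by
    have := Real.log_neg (tanh_half_pos hη) (tanh_half_lt_one hη)
    simp only [hu]; linarith
  have h1 : u ≤ Real.sinh u := Real.self_le_sinh_iff.2 hu0.le
  rw [sinh_neg_log_tanh hη] at h1
  have hlog : Real.log (Real.tanh (η / 2)) = -u := by simp [hu]
  have key := cosh_div_key hs
  rw [N₄, hlog]
  linarith

lemma N4_upper {η : ℝ} (hη : 1 ≤ η) :
    N₄ η ≤ Real.exp (-η) / Real.sinh η ^ 2 + 1 / Real.sinh η ^ 3 := by
  have hη0 : (0:ℝ) < η := by linarith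
  set u := -Real.log (Real.tanh (η / 2)) with hu
  have hs : 0 < Real.sinh η := Real.sinh_pos_iff.2 hη0
  have hs1 : 1 < Real.sinh 1 := Real.self_lt_sinh_iff.2 one_pos
  have hs1η : Real.sinh 1 ≤ Real.sinh η := Real.sinh_le_sinh.2 hη
  have hu0 : 0 < u := by
    have := Real.log_neg (tanh_half_pos hη0) (tanh_half_lt_one hη0)
    simp only [hu]; linarith
  have h1 : u ≤ Real.sinh u := Real.self_le_sinh_iff.2 hu0.le
  have hsu : Real.sinh u = 1 / Real.sinh η := sinh_neg_log_tanh hη0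
  have hule : u ≤ 1 / Real.sinh η := by rw [← hsu]; exact h1
  have hu1 : u ≤ 1 := by
    calc u ≤ 1 / Real.sinh η := hule
    _ ≤ 1 := by rw [div_le_one hs]; linarith
  have hcub : Real.sinh u ≤ u + u ^ 3 := sinh_le_cubic hu0.le hu1
  have hcube : u ^ 3 ≤ (1 / Real.sinh η) ^ 3 := pow_le_pow_left₀ hu0.le hule 3
  have hpow : (1 / Real.sinh η) ^ 3 = 1 / Real.sinh η ^ 3 := by
    rw [div_pow, one_pow]
  have hge : 1 / Real.sinh η - 1 / Real.sinh η ^ 3 ≤ u := by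
    rw [hsu] at hcub
    rw [hpow] at hcube
    linarith
  have hlog : Real.log (Real.tanh (η / 2)) = -u := by simp [hu]
  have key := cosh_div_key hs
  rw [N₄, hlog]
  linarith

lemma N4_bounds {η : ℝ} (hη : 1 ≤ η) :
    4 * Real.exp (-(3 * η)) ≤ N₄ η ∧ N₄ η ≤ 27 * Real.exp (-(3 * η)) := by
  have hη0 : (0:ℝ) < η := by linarith
  have hs : 0 < Real.sinh η := Real.sinh_pos_iff.2 hη0
  have hE : 0 < Real.exp η := Real.exp_pos _
  have he : 0 < Real.exp (-η) := Real.exp_pos _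
  have heE : Real.exp (-η) * Real.exp η = 1 := by
    rw [← Real.exp_add]; simp
  have h3 : Real.exp (-(3 * η)) = Real.exp (-η) * Real.exp (-η) * Real.exp (-η) := by
    rw [← Real.exp_add, ← Real.exp_add]; ring_nf
  have hE2 : 2 ≤ Real.exp η := by
    have := Real.add_one_le_exp η; linarith
  have hsle : Real.sinh η ≤ Real.exp η / 2 := by
    rw [Real.sinh_eq]; linarith
  have he12 : Real.exp (-η) ≤ 1 / 2 := by nlinarith
  have hsge : 3 / 8 * Real.exp η ≤ Real.sinh η := by
    rw [Real.sinh_eq]; linarith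
  constructor
  · have hlow := N4_lower hη0
    have hs2 : Real.sinh η ^ 2 ≤ Real.exp η ^ 2 / 4 := by nlinarith
    have hprod : Real.exp (-η) * Real.exp (-η) * Real.exp (-η) * Real.exp η ^ 2
        = Real.exp (-η) := by
      rw [sq, ← Real.exp_add, ← Real.exp_add, ← Real.exp_add, ← Real.exp_add]
      ring_nf
    have hm := mul_le_mul_of_nonneg_left hs2
      (by positivity : (0:ℝ) ≤ Real.exp (-η) * Real.exp (-η) * Real.exp (-η))
    have key2 : 4 * Real.exp (-(3 * η)) ≤ Real.exp (-η) / Real.sinh η ^ 2 := by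
      rw [le_div_iff₀ (by positivity), h3]
      nlinarith [hm, hprod]
    linarith
  · have hup := N4_upper hη
    have hinv : 1 / Real.sinh η ≤ 8 / 3 * Real.exp (-η) := by
      rw [div_le_iff₀ hs]
      nlinarith [hsge, he, heE]
    have hinv0 : (0:ℝ) ≤ 1 / Real.sinh η := by positivity
    have hx2 : (1 / Real.sinh η) * (1 / Real.sinh η)
        ≤ (8 / 3 * Real.exp (-η)) * (8 / 3 * Real.exp (-η)) :=
      mul_le_mul hinv hinv hinv0 (by positivity)
    have hx3 : (1 / Real.sinh η) * (1 / Real.sinh η) * (1 / Real.sinh η)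
        ≤ (8 / 3 * Real.exp (-η)) * (8 / 3 * Real.exp (-η)) * (8 / 3 * Real.exp (-η)) :=
      mul_le_mul hx2 hinv hinv0 (by positivity)
    have h2 : Real.exp (-η) / Real.sinh η ^ 2
        = Real.exp (-η) * ((1 / Real.sinh η) * (1 / Real.sinh η)) := by
      field_simp
    have h3' : 1 / Real.sinh η ^ 3
        = (1 / Real.sinh η) * (1 / Real.sinh η) * (1 / Real.sinh η) := by
      field_simp
    have b1 : Real.exp (-η) / Real.sinh η ^ 2
        ≤ (64 / 9) * (Real.exp (-η) * Real.exp (-η) * Real.exp (-η)) := by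
      rw [h2]
      nlinarith [mul_le_mul_of_nonneg_left hx2 he.le]
    have b2 : 1 / Real.sinh η ^ 3
        ≤ (512 / 27) * (Real.exp (-η) * Real.exp (-η) * Real.exp (-η)) := by
      rw [h3']
      nlinarith [hx3]
    rw [h3]
    nlinarith [b1, b2, hup, mul_pos (mul_pos he he) he]


/-- `N₄` is positive on `(0,∞)` and `lim_{η→∞} (1/η) log N₄(η) = -3`, i.e. the hitting
probability of a hyperbolic ball for the 4-dimensional hyperbolic Brownian motion decays
with exponential rate `n - 1 = 3`. -/
theorem hitting_decay_dim4 :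
    (∀ η : ℝ, 0 < η → 0 < N₄ η) ∧
    Filter.Tendsto (fun η : ℝ => (1 / η) * Real.log (N₄ η)) Filter.atTop (nhds (-3)) := by
  have hpos : ∀ η : ℝ, 0 < η → 0 < N₄ η := by
    intro η hη
    have h := N4_lower hη
    have hs : 0 < Real.sinh η := Real.sinh_pos_iff.2 hη
    have : 0 < Real.exp (-η) / Real.sinh η ^ 2 := by positivity
    linarith
  refine ⟨hpos, ?_⟩
  have hL : Tendsto (fun η : ℝ => (1 / η) * Real.log 4 - 3) atTop (nhds (-3)) := by
    have := (tendsto_inv_atTop_zero.mul_const (Real.log 4)).sub_const (3:ℝ)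
    simpa [one_div] using this
  have hU : Tendsto (fun η : ℝ => (1 / η) * Real.log 27 - 3) atTop (nhds (-3)) := by
    have := (tendsto_inv_atTop_zero.mul_const (Real.log 27)).sub_const (3:ℝ)
    simpa [one_div] using this
  apply tendsto_of_tendsto_of_tendsto_of_le_of_le' hL hU
  · filter_upwards [eventually_ge_atTop (1:ℝ)] with η hη
    have hη0 : (0:ℝ) < η := by linarith
    have hb := (N4_bounds hη).1
    have hNpos : 0 < N₄ η := hpos η hη0
    have hlog : Real.log (4 * Real.exp (-(3 * η))) ≤ Real.log (N₄ η) :=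
      (Real.log_le_log_iff (by positivity) hNpos).2 hb
    have hlog4 : Real.log (4 * Real.exp (-(3 * η))) = Real.log 4 - 3 * η := by
      rw [Real.log_mul (by norm_num) (Real.exp_ne_zero _), Real.log_exp]; ring
    rw [hlog4] at hlog
    have h1η : (0:ℝ) ≤ 1 / η := by positivity
    have hm := mul_le_mul_of_nonneg_left hlog h1η
    rw [mul_sub] at hm
    have h3η : (1 / η) * (3 * η) = 3 := by field_simp
    rw [h3η] at hm
    exact hm
  · filter_upwards [eventually_ge_atTop (1:ℝ)] with η hη
    have hη0 : (0:ℝ) < η := by linarith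
    have hb := (N4_bounds hη).2
    have hNpos : 0 < N₄ η := hpos η hη0
    have hlog : Real.log (N₄ η) ≤ Real.log (27 * Real.exp (-(3 * η))) :=
      (Real.log_le_log_iff hNpos (by positivity)).2 hb
    have hlog27 : Real.log (27 * Real.exp (-(3 * η))) = Real.log 27 - 3 * η := by
      rw [Real.log_mul (by norm_num) (Real.exp_ne_zero _), Real.log_exp]; ring
    rw [hlog27] at hlog
    have h1η : (0:ℝ) ≤ 1 / η := by positivity
    have hm := mul_le_mul_of_nonneg_left hlog h1η
    rw [mul_sub] at hm
    have h3η : (1 / η) * (3 * η) = 3 := by field_simp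
    rw [h3η] at hm
    exact hm
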